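/- arXiv:2503.19612 — 6 statements merged into one kernel-verified Lean document; each statement's English description precedes it below -/
import Mathlib

section
/- (Off-policy gradient) Let μ be a full-support behavior policy and suppose each map θ ↦ π_θ(y|x) is Fréchet differentiable at θ₀. Then θ ↦ L_μ(π_θ) is Fréchet differentiable at θ₀ and its derivative equals −β · Σ_x ρ(x) · Σ_y μ(y|x) · (R^{π_{θ₀}}_β(x,y) − R^{π_{θ₀}}_β(x,μ)) · D_θ[log π_θ(y|x)](θ₀), where R^π_β(x,μ) = Σ_{y'} μ(y'|x)·R^π_β(x,y'). -/
open Finset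

noncomputable section

/-- The regularized reward `R^π_β(x,y)`. -/
def Rreg {X Y : Type*} (πref r : X → Y → ℝ) (β : ℝ) (π : X → Y → ℝ) (x : X) (y : Y) : ℝ :=
  r x y - β * Real.log (π x y / πref x y)

/-- Off-policy loss `L_μ(π)`. -/
def Lmu {X Y : Type*} [Fintype X] [Fintype Y] (ρ : X → ℝ) (πref r : X → Y → ℝ) (β : ℝ)
    (μ π : X → Y → ℝ) : ℝ :=
  (1 / 2) * ∑ x, ρ x * ∑ y, μ x y *
    (Rreg πref r β π x y - ∑ y', μ x y' * Rreg πref r β π x y') ^ 2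

/-- gradient of the off-policy loss. -/
theorem off_policy_gradient
    {X Y : Type*} [Fintype X] [Fintype Y] [Nonempty X] [Nonempty Y]
    {Θ : Type*} [NormedAddCommGroup Θ] [NormedSpace ℝ Θ]
    (πref : X → Y → ℝ) (href_pos : ∀ x y, 0 < πref x y)
    (href_sum : ∀ x, ∑ y, πref x y = 1)
    (r : X → Y → ℝ) (β : ℝ) (hβ : 0 < β)
    (ρ : X → ℝ) (hρ_nonneg : ∀ x, 0 ≤ ρ x) (hρ_sum : ∑ x, ρ x = 1)
    (μ : X → Y → ℝ) (hμ_pos : ∀ x y, 0 < μ x y) (hμ_sum : ∀ x, ∑ y, μ x y = 1)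
    (π : Θ → X → Y → ℝ) (hpos : ∀ θ x y, 0 < π θ x y) (hsum : ∀ θ x, ∑ y, π θ x y = 1)
    (θ₀ : Θ) (hdiff : ∀ x y, DifferentiableAt ℝ (fun θ => π θ x y) θ₀) :
    HasFDerivAt (fun θ => Lmu ρ πref r β μ (π θ))
      (∑ x, ∑ y,
        (-β * (ρ x * (μ x y *
          (Rreg πref r β (π θ₀) x y - ∑ y', μ x y' * Rreg πref r β (π θ₀) x y')))) •
          fderiv ℝ (fun θ => Real.log (π θ x y)) θ₀)
      θ₀ := by
  classical
  set ℓ : X → Y → (Θ →L[ℝ] ℝ) := fun x y => fderiv ℝ (fun θ => Real.log (π θ x y)) θ₀ with hℓ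
  set g : X → Y → ℝ := fun x y =>
    Rreg πref r β (π θ₀) x y - ∑ y', μ x y' * Rreg πref r β (π θ₀) x y' with hg
  set L2 : X → Y → (Θ →L[ℝ] ℝ) := fun x y => ℓ x y - ∑ y', μ x y' • ℓ x y' with hL2
  have hlog : ∀ x y, HasFDerivAt (fun θ => Real.log (π θ x y)) (ℓ x y) θ₀ := fun x y =>
    ((hdiff x y).log (hpos θ₀ x y).ne').hasFDerivAt
  have hR : ∀ x y, HasFDerivAt (fun θ => Rreg πref r β (π θ) x y) ((-β) • ℓ x y) θ₀ := by
    intro x y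
    have heq : (fun θ => Rreg πref r β (π θ) x y)
        = fun θ => r x y - β * (Real.log (π θ x y) - Real.log (πref x y)) := by
      funext θ
      simp [Rreg, Real.log_div (hpos θ x y).ne' (href_pos x y).ne']
    rw [heq]
    have := (((hlog x y).sub_const (Real.log (πref x y))).const_mul β).const_sub (r x y)
    have h2 : (-β) • ℓ x y = -(β • ℓ x y) := by ext v; simp
    rw [h2]
    exact this
  have hG : ∀ x y, HasFDerivAt
      (fun θ => Rreg πref r β (π θ) x y - ∑ y', μ x y' * Rreg πref r β (π θ) x y')
      ((-β) • L2 x y) θ₀ := by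
    intro x y
    have hsum' : HasFDerivAt (fun θ => ∑ y', μ x y' * Rreg πref r β (π θ) x y')
        (∑ y', μ x y' • ((-β) • ℓ x y')) θ₀ :=
      HasFDerivAt.fun_sum (fun y' _ => (hR x y').const_mul (μ x y'))
    have := (hR x y).sub hsum'
    have harr : (-β) • L2 x y = (-β) • ℓ x y - ∑ y', μ x y' • ((-β) • ℓ x y') := by
      simp only [hL2, smul_sub, Finset.smul_sum]
      congr 1
      exact Finset.sum_congr rfl fun y' _ => smul_comm _ _ _
    rw [harr]
    exact this
  set D : X → Y → (Θ →L[ℝ] ℝ) := fun x y =>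
    g x y • ((-β) • L2 x y) + g x y • ((-β) • L2 x y) with hD
  have hmain : HasFDerivAt (fun θ => Lmu ρ πref r β μ (π θ))
      ((1/2 : ℝ) • ∑ x, ρ x • ∑ y, μ x y • D x y) θ₀ := by
    have hsq : ∀ x y, HasFDerivAt
        (fun θ => (Rreg πref r β (π θ) x y - ∑ y', μ x y' * Rreg πref r β (π θ) x y') ^ 2)
        (D x y) θ₀ := by
      intro x y
      have := (hG x y).mul (hG x y)
      have heq : (fun θ => (Rreg πref r β (π θ) x y - ∑ y', μ x y' * Rreg πref r β (π θ) x y') ^ 2)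
          = fun θ => (Rreg πref r β (π θ) x y - ∑ y', μ x y' * Rreg πref r β (π θ) x y')
            * (Rreg πref r β (π θ) x y - ∑ y', μ x y' * Rreg πref r β (π θ) x y') := by
        funext θ; ring
      rw [heq]
      exact this
    have h1 : ∀ x, HasFDerivAt
        (fun θ => ρ x * ∑ y, μ x y *
          (Rreg πref r β (π θ) x y - ∑ y', μ x y' * Rreg πref r β (π θ) x y') ^ 2)
        (ρ x • ∑ y, μ x y • D x y) θ₀ := fun x =>
      (HasFDerivAt.fun_sum (fun y _ => (hsq x y).const_mul (μ x y))).const_mul (ρ x)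
    have h2 := (HasFDerivAt.fun_sum (fun x (_ : x ∈ Finset.univ) => h1 x)).const_mul (1/2 : ℝ)
    simpa [Lmu] using h2
  have hzero : ∀ x, ∑ y, μ x y * g x y = 0 := by
    intro x
    simp only [hg, mul_sub, Finset.sum_sub_distrib]
    rw [← Finset.sum_mul, hμ_sum x, one_mul]
    ring
  have hEq : (∑ x, ∑ y, (-β * (ρ x * (μ x y * g x y))) • ℓ x y)
      = (1/2 : ℝ) • ∑ x, ρ x • ∑ y, μ x y • D x y := by
    ext v
    simp only [hD, ContinuousLinearMap.coe_sum', Finset.sum_apply,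
      ContinuousLinearMap.coe_smul', Pi.smul_apply, ContinuousLinearMap.add_apply,
      ContinuousLinearMap.smul_apply, hL2, ContinuousLinearMap.sub_apply,
      ContinuousLinearMap.coe_sub', Pi.sub_apply, smul_eq_mul]
    rw [Finset.mul_sum]
    refine Finset.sum_congr rfl fun x _ => ?_
    rw [Finset.mul_sum, Finset.mul_sum]
    calc ∑ y, -β * (ρ x * (μ x y * g x y)) * (ℓ x y) v
        = (∑ y, (1/2 : ℝ) * (ρ x * (μ x y *
            (g x y * (-β * ((ℓ x y) v - ∑ y', μ x y' * (ℓ x y') v))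
            + g x y * (-β * ((ℓ x y) v - ∑ y', μ x y' * (ℓ x y') v))))))
          - (β * ρ x * (∑ y', μ x y' * (ℓ x y') v)) * ∑ y, μ x y * g x y := by
          rw [Finset.mul_sum, ← Finset.sum_sub_distrib]
          exact Finset.sum_congr rfl fun y _ => by ring
      _ = ∑ y, (1/2 : ℝ) * (ρ x * (μ x y *
            (g x y * (-β * ((ℓ x y) v - ∑ y', μ x y' * (ℓ x y') v))
            + g x y * (-β * ((ℓ x y) v - ∑ y', μ x y' * (ℓ x y') v))))) := by
          rw [hzero x, mul_zero, sub_zero]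
  rw [hEq]
  exact hmain
end
end

section
/- (Alignment of the pathwise derivative with the RLHF gradient) Suppose each map θ ↦ π_θ(y|x) is Fréchet differentiable at θ₀, and set μ = π_{θ₀}. Then the Fréchet derivative at θ₀ of θ ↦ L_μ(π_θ) equals −β times the Fréchet derivative at θ₀ of θ ↦ G(π_θ). -/
open Finset

noncomputable section

/-- KL divergence between two (full-support) distributions on a finite type. -/
def KLdiv {Y : Type*} [Fintype Y] (p q : Y → ℝ) : ℝ :=
  ∑ y, p y * Real.log (p y / q y)

/-- The KL-regularized objective `G`. -/
def G {X Y : Type*} [Fintype X] [Fintype Y] (ρ : X → ℝ) (πref r : X → Y → ℝ) (β : ℝ)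
    (π : X → Y → ℝ) : ℝ :=
  ∑ x, ρ x * ((∑ y, π x y * r x y) - β * KLdiv (π x) (πref x))

set_option maxHeartbeats 1000000 in
/-- with on-policy sampling `μ = π_{θ₀}`, the gradient of the off-policy
loss is aligned with the RLHF gradient: `∇ L_μ(π_θ)|_{θ₀} = -β ∇ G(π_θ)|_{θ₀}`. -/
theorem pathwise_derivative_aligned_with_RLHF_gradient
    {X Y : Type*} [Fintype X] [Fintype Y] [Nonempty X] [Nonempty Y]
    {Θ : Type*} [NormedAddCommGroup Θ] [NormedSpace ℝ Θ]
    (πref : X → Y → ℝ) (href_pos : ∀ x y, 0 < πref x y)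
    (href_sum : ∀ x, ∑ y, πref x y = 1)
    (r : X → Y → ℝ) (β : ℝ) (hβ : 0 < β)
    (ρ : X → ℝ) (hρ_nonneg : ∀ x, 0 ≤ ρ x) (hρ_sum : ∑ x, ρ x = 1)
    (π : Θ → X → Y → ℝ) (hpos : ∀ θ x y, 0 < π θ x y) (hsum : ∀ θ x, ∑ y, π θ x y = 1)
    (θ₀ : Θ) (hdiff : ∀ x y, DifferentiableAt ℝ (fun θ => π θ x y) θ₀) :
    fderiv ℝ (fun θ => Lmu ρ πref r β (π θ₀) (π θ)) θ₀
      = (-β) • fderiv ℝ (fun θ => G ρ πref r β (π θ)) θ₀ := by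
  classical
  set D : X → Y → Θ →L[ℝ] ℝ := fun x y => fderiv ℝ (fun θ => π θ x y) θ₀ with hDdef
  have hD : ∀ x y, HasFDerivAt (fun θ => π θ x y) (D x y) θ₀ :=
    fun x y => (hdiff x y).hasFDerivAt
  have hDsum : ∀ x, ∑ y, D x y = 0 := by
    intro x
    have h1 : HasFDerivAt (fun θ => ∑ y, π θ x y) (∑ y, D x y) θ₀ :=
      HasFDerivAt.fun_sum (fun y _ => hD x y)
    have h2 : HasFDerivAt (fun θ => ∑ y, π θ x y) (0 : Θ →L[ℝ] ℝ) θ₀ := by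
      have he : (fun θ : Θ => ∑ y, π θ x y) = fun _ => (1 : ℝ) := funext fun θ => hsum θ x
      rw [he]; exact hasFDerivAt_const 1 θ₀
    exact h1.unique h2
  set E : X → Y → Θ →L[ℝ] ℝ := fun x y => (-(β * (π θ₀ x y)⁻¹)) • D x y with hEdef
  -- derivative of the rewritten regularized reward
  have hE' : ∀ x y, HasFDerivAt
      (fun θ => r x y - β * (Real.log (π θ x y) - Real.log (πref x y))) (E x y) θ₀ := by
    intro x y
    have h := ((((hD x y).log (hpos θ₀ x y).ne').sub_const
        (Real.log (πref x y))).const_mul β).const_sub (r x y)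
    refine h.congr_fderiv ?_
    simp only [hEdef, smul_smul, neg_smul]
    ext v
    simp
  have hRval : ∀ x y, Rreg πref r β (π θ₀) x y
      = r x y - β * (Real.log (π θ₀ x y) - Real.log (πref x y)) := by
    intro x y
    rw [Rreg, Real.log_div (hpos θ₀ x y).ne' (href_pos x y).ne']
  have hE : ∀ x y, HasFDerivAt (fun θ => Rreg πref r β (π θ) x y) (E x y) θ₀ := by
    intro x y
    have heq : (fun θ => Rreg πref r β (π θ) x y)
        = fun θ => r x y - β * (Real.log (π θ x y) - Real.log (πref x y)) :=
      funext fun θ => by rw [Rreg, Real.log_div (hpos θ x y).ne' (href_pos x y).ne']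
    rw [heq]; exact hE' x y
  have hμE : ∀ x y, π θ₀ x y • E x y = (-β) • D x y := by
    intro x y
    simp only [hEdef, smul_smul]
    congr 1
    have hμ := (hpos θ₀ x y).ne'
    field_simp
  have hRbar : ∀ x, HasFDerivAt
      (fun θ => ∑ y', π θ₀ x y' * Rreg πref r β (π θ) x y') (0 : Θ →L[ℝ] ℝ) θ₀ := by
    intro x
    have h := HasFDerivAt.fun_sum (fun y' (_ : y' ∈ Finset.univ) => (hE x y').const_mul (π θ₀ x y'))
    refine h.congr_fderiv ?_
    calc ∑ y' : Y, π θ₀ x y' • E x y' = ∑ y' : Y, (-β) • D x y' :=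
          Finset.sum_congr rfl fun y' _ => hμE x y'
      _ = (-β) • ∑ y' : Y, D x y' := (Finset.smul_sum).symm
      _ = 0 := by rw [hDsum, smul_zero]
  set R : X → Y → ℝ := fun x y => Rreg πref r β (π θ₀) x y with hRdef
  set Rbar : X → ℝ := fun x => ∑ y', π θ₀ x y' * R x y' with hRbardef
  -- derivative of the squared centered reward
  have hsq : ∀ x y, HasFDerivAt
      (fun θ => (Rreg πref r β (π θ) x y
        - ∑ y', π θ₀ x y' * Rreg πref r β (π θ) x y') ^ 2)
      ((2 * (R x y - Rbar x)) • E x y) θ₀ := by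
    intro x y
    have h0 := (hE x y).sub (hRbar x)
    have h : HasFDerivAt
        (fun θ => (Rreg πref r β (π θ) x y - ∑ y', π θ₀ x y' * Rreg πref r β (π θ) x y')
          * (Rreg πref r β (π θ) x y - ∑ y', π θ₀ x y' * Rreg πref r β (π θ) x y'))
        ((R x y - Rbar x) • (E x y - 0) + (R x y - Rbar x) • (E x y - 0)) θ₀ := h0.mul h0
    simp only [pow_two]
    convert h using 1
    rw [sub_zero, two_mul, add_smul]
  -- derivative of Lmu
  have hL : HasFDerivAt (fun θ => Lmu ρ πref r β (π θ₀) (π θ))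
      ((1 / 2 : ℝ) • ∑ x, ρ x • ∑ y, π θ₀ x y • (2 * (R x y - Rbar x)) • E x y) θ₀ := by
    simp only [Lmu]
    exact (HasFDerivAt.fun_sum fun x _ =>
      (HasFDerivAt.fun_sum fun y _ => (hsq x y).const_mul (π θ₀ x y)).const_mul (ρ x)).const_mul
        (1 / 2 : ℝ)
  -- derivative of G
  have hGA : ∀ x y, HasFDerivAt
      (fun θ => π θ x y * (r x y - β * (Real.log (π θ x y) - Real.log (πref x y))))
      (π θ₀ x y • E x y + R x y • D x y) θ₀ := by
    intro x y
    have h := (hD x y).mul (hE' x y)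
    refine h.congr_fderiv ?_
    exact congrArg (fun t => π θ₀ x y • E x y + t • D x y) (hRval x y).symm
  have hGfun : (fun θ => G ρ πref r β (π θ))
      = fun θ => ∑ x, ρ x * ∑ y, π θ x y
          * (r x y - β * (Real.log (π θ x y) - Real.log (πref x y))) := by
    funext θ
    simp only [G, KLdiv]
    refine Finset.sum_congr rfl fun x _ => ?_
    congr 1
    rw [Finset.mul_sum, ← Finset.sum_sub_distrib]
    refine Finset.sum_congr rfl fun y _ => ?_
    rw [Real.log_div (hpos θ x y).ne' (href_pos x y).ne']
    ring
  have hG : HasFDerivAt (fun θ => G ρ πref r β (π θ))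
      (∑ x, ρ x • ∑ y, (π θ₀ x y • E x y + R x y • D x y)) θ₀ := by
    rw [hGfun]
    exact HasFDerivAt.fun_sum fun x _ =>
      (HasFDerivAt.fun_sum fun y _ => hGA x y).const_mul (ρ x)
  -- per-x simplifications
  have key1 : ∀ x, ∑ y, π θ₀ x y • (2 * (R x y - Rbar x)) • E x y
      = (-(2 * β)) • ∑ y, R x y • D x y := by
    intro x
    have h1 : ∀ y : Y, π θ₀ x y • (2 * (R x y - Rbar x)) • E x y
        = ((-(2 * β)) * (R x y - Rbar x)) • D x y := by
      intro y
      rw [smul_comm, hμE, smul_smul]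
      congr 1
      ring
    calc ∑ y, π θ₀ x y • (2 * (R x y - Rbar x)) • E x y
        = ∑ y, ((-(2 * β)) * (R x y - Rbar x)) • D x y :=
          Finset.sum_congr rfl fun y _ => h1 y
      _ = ∑ y, (((-(2 * β)) * R x y) • D x y - ((-(2 * β)) * Rbar x) • D x y) :=
          Finset.sum_congr rfl fun y _ => by ext v; simp; ring
      _ = (∑ y, ((-(2 * β)) * R x y) • D x y) - ((-(2 * β)) * Rbar x) • ∑ y, D x y := by
          rw [Finset.sum_sub_distrib, Finset.smul_sum]
      _ = ∑ y, ((-(2 * β)) * R x y) • D x y := by rw [hDsum, smul_zero, sub_zero]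
      _ = (-(2 * β)) • ∑ y, R x y • D x y := by
          rw [Finset.smul_sum]
          exact Finset.sum_congr rfl fun y _ => (smul_smul _ _ _).symm
  have key2 : ∀ x, ∑ y, (π θ₀ x y • E x y + R x y • D x y) = ∑ y, R x y • D x y := by
    intro x
    calc ∑ y, (π θ₀ x y • E x y + R x y • D x y)
        = ∑ y, ((-β) • D x y + R x y • D x y) :=
          Finset.sum_congr rfl fun y _ => by rw [hμE]
      _ = (-β) • (∑ y, D x y) + ∑ y, R x y • D x y := by
          rw [Finset.sum_add_distrib, Finset.smul_sum]
      _ = ∑ y, R x y • D x y := by rw [hDsum, smul_zero, zero_add]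
  rw [hL.fderiv, hG.fderiv]
  calc (1 / 2 : ℝ) • ∑ x, ρ x • ∑ y, π θ₀ x y • (2 * (R x y - Rbar x)) • E x y
      = (1 / 2 : ℝ) • ∑ x, ρ x • (-(2 * β)) • ∑ y, R x y • D x y := by
        congr 1
        exact Finset.sum_congr rfl fun x _ => by rw [key1 x]
    _ = (-β) • ∑ x, ρ x • ∑ y, R x y • D x y := by
        rw [Finset.smul_sum, Finset.smul_sum]
        refine Finset.sum_congr rfl fun x _ => ?_
        rw [smul_smul, smul_smul, smul_smul]
        congr 1
        ring
    _ = (-β) • ∑ x, ρ x • ∑ y, (π θ₀ x y • E x y + R x y • D x y) := by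
        congr 1
        exact Finset.sum_congr rfl fun x _ => by rw [key2 x]
end
end

section
/- (On-policy gradient decomposition) Suppose each map θ ↦ π_θ(y|x) is Fréchet differentiable at θ₀. Write π = π_{θ₀}, R(x,y) = R^π_β(x,y), R̄(x) = Σ_y π(y|x)·R(x,y), and s(x,y) = D_θ[log π_θ(y|x)](θ₀). Then θ ↦ L(π_θ) (where L(π_θ) = L_{π_θ}(π_θ) with both the sampling distribution and the regularized reward depending on θ) is Fréchet differentiable at θ₀ with derivative equal to −β·Σ_x ρ(x)·Σ_y π(y|x)·(R(x,y) − R̄(x))·s(x,y) + (1/2)·Σ_x ρ(x)·Σ_y π(y|x)·(R(x,y) − R̄(x))²·s(x,y). -/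
open Finset

noncomputable section

/-- on-policy gradient decomposition, pathwise-derivative term plus
likelihood-ratio term. -/
theorem on_policy_gradient_decomposition
    {X Y : Type*} [Fintype X] [Fintype Y] [Nonempty X] [Nonempty Y]
    {Θ : Type*} [NormedAddCommGroup Θ] [NormedSpace ℝ Θ]
    (πref : X → Y → ℝ) (href_pos : ∀ x y, 0 < πref x y)
    (href_sum : ∀ x, ∑ y, πref x y = 1)
    (r : X → Y → ℝ) (β : ℝ) (hβ : 0 < β)
    (ρ : X → ℝ) (hρ_nonneg : ∀ x, 0 ≤ ρ x) (hρ_sum : ∑ x, ρ x = 1)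
    (π : Θ → X → Y → ℝ) (hpos : ∀ θ x y, 0 < π θ x y) (hsum : ∀ θ x, ∑ y, π θ x y = 1)
    (θ₀ : Θ) (hdiff : ∀ x y, DifferentiableAt ℝ (fun θ => π θ x y) θ₀) :
    HasFDerivAt (fun θ => Lmu ρ πref r β (π θ) (π θ))
      ((∑ x, ∑ y,
          (-β * (ρ x * (π θ₀ x y *
            (Rreg πref r β (π θ₀) x y - ∑ y', π θ₀ x y' * Rreg πref r β (π θ₀) x y')))) •
            fderiv ℝ (fun θ => Real.log (π θ x y)) θ₀)
        + (∑ x, ∑ y,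
          ((1 / 2) * (ρ x * (π θ₀ x y *
            (Rreg πref r β (π θ₀) x y - ∑ y', π θ₀ x y' * Rreg πref r β (π θ₀) x y') ^ 2))) •
            fderiv ℝ (fun θ => Real.log (π θ x y)) θ₀))
      θ₀ := by
  set s : X → Y → (Θ →L[ℝ] ℝ) := fun x y => fderiv ℝ (fun θ => Real.log (π θ x y)) θ₀ with hs
  -- derivative of log π
  have hlog : ∀ x y, HasFDerivAt (fun θ => Real.log (π θ x y)) (s x y) θ₀ := by
    intro x y
    exact ((hdiff x y).log (hpos θ₀ x y).ne').hasFDerivAt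
  -- derivative of π itself
  have hp : ∀ x y, HasFDerivAt (fun θ => π θ x y) (π θ₀ x y • s x y) θ₀ := by
    intro x y
    have hD := (hdiff x y).hasFDerivAt
    have hl := hD.log (hpos θ₀ x y).ne'
    have hsy : s x y = (π θ₀ x y)⁻¹ • fderiv ℝ (fun θ => π θ x y) θ₀ := by
      rw [hs]; exact hl.fderiv
    have : π θ₀ x y • s x y = fderiv ℝ (fun θ => π θ x y) θ₀ := by
      rw [hsy, smul_smul, mul_inv_cancel₀ (hpos θ₀ x y).ne', one_smul]
    rw [this]; exact hD
  -- sum of π-derivatives vanishes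
  have hsum0 : ∀ x, (∑ y, π θ₀ x y • s x y) = 0 := by
    intro x
    have h1 : HasFDerivAt (fun θ => ∑ y, π θ x y) (∑ y, π θ₀ x y • s x y) θ₀ :=
      HasFDerivAt.fun_sum (fun y _ => hp x y)
    have h2 : (fun θ : Θ => ∑ y, π θ x y) = fun _ => (1 : ℝ) := funext fun θ => hsum θ x
    rw [h2] at h1
    exact h1.unique (hasFDerivAt_const 1 θ₀)
  -- derivative of the regularized reward
  have hR : ∀ x y, HasFDerivAt (fun θ => Rreg πref r β (π θ) x y) ((-β) • s x y) θ₀ := by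
    intro x y
    have he : (fun θ => Rreg πref r β (π θ) x y)
        = fun θ => r x y - β * (Real.log (π θ x y) - Real.log (πref x y)) := by
      funext θ
      rw [Rreg, Real.log_div (hpos θ x y).ne' (href_pos x y).ne']
    rw [he]
    have h1 := ((hlog x y).sub_const (Real.log (πref x y))).const_mul β
    have h2 := (hasFDerivAt_const (r x y) θ₀).sub h1
    have : (0 : Θ →L[ℝ] ℝ) - β • s x y = (-β) • s x y := by
      rw [zero_sub]; exact (neg_smul β (s x y)).symm
    rwa [this] at h2
  -- derivative of R̄
  have hRb : ∀ x, HasFDerivAt (fun θ => ∑ y', π θ x y' * Rreg πref r β (π θ) x y')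
      (∑ y', (π θ₀ x y' * Rreg πref r β (π θ₀) x y') • s x y') θ₀ := by
    intro x
    have h := HasFDerivAt.fun_sum (fun y' (_ : y' ∈ Finset.univ) => (hp x y').mul (hR x y'))
    have he : (∑ y', (π θ₀ x y' • ((-β) • s x y')
          + Rreg πref r β (π θ₀) x y' • (π θ₀ x y' • s x y')))
        = ∑ y', (π θ₀ x y' * Rreg πref r β (π θ₀) x y') • s x y' := by
      rw [Finset.sum_add_distrib]
      have h0 : (∑ y', π θ₀ x y' • ((-β) • s x y')) = 0 := by
        rw [show (fun y' => π θ₀ x y' • ((-β) • s x y'))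
            = fun y' => (-β) • (π θ₀ x y' • s x y') from funext fun y' => smul_comm _ _ _]
        rw [← Finset.smul_sum, hsum0, smul_zero]
      rw [h0, zero_add]
      refine Finset.sum_congr rfl fun y' _ => ?_
      rw [smul_smul, mul_comm]
    rwa [he] at h
  -- the full derivative, structurally
  have hmain : HasFDerivAt (fun θ => Lmu ρ πref r β (π θ) (π θ))
      ((1/2 : ℝ) • ∑ x, ρ x • ∑ y,
        (π θ₀ x y • ((Rreg πref r β (π θ₀) x y - ∑ y', π θ₀ x y' * Rreg πref r β (π θ₀) x y') •
            ((-β) • s x y - ∑ y', (π θ₀ x y' * Rreg πref r β (π θ₀) x y') • s x y')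
          + (Rreg πref r β (π θ₀) x y - ∑ y', π θ₀ x y' * Rreg πref r β (π θ₀) x y') •
            ((-β) • s x y - ∑ y', (π θ₀ x y' * Rreg πref r β (π θ₀) x y') • s x y'))
        + (Rreg πref r β (π θ₀) x y - ∑ y', π θ₀ x y' * Rreg πref r β (π θ₀) x y') ^ 2 •
            (π θ₀ x y • s x y))) θ₀ := by
    unfold Lmu
    refine HasFDerivAt.const_mul ?_ (1/2 : ℝ)
    refine HasFDerivAt.fun_sum fun x _ => ?_
    refine HasFDerivAt.const_mul ?_ (ρ x)
    refine HasFDerivAt.fun_sum fun y _ => ?_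
    have hΔ : HasFDerivAt
        (fun θ => Rreg πref r β (π θ) x y - ∑ y', π θ x y' * Rreg πref r β (π θ) x y')
        ((-β) • s x y - ∑ y', (π θ₀ x y' * Rreg πref r β (π θ₀) x y') • s x y') θ₀ :=
      (hR x y).sub (hRb x)
    have hsq := hΔ.mul hΔ
    have he : (fun θ => π θ x y *
        (Rreg πref r β (π θ) x y - ∑ y', π θ x y' * Rreg πref r β (π θ) x y') ^ 2)
        = fun θ => π θ x y *
        ((Rreg πref r β (π θ) x y - ∑ y', π θ x y' * Rreg πref r β (π θ) x y') *
         (Rreg πref r β (π θ) x y - ∑ y', π θ x y' * Rreg πref r β (π θ) x y')) := by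
      funext θ; rw [sq]
    rw [he]
    have h := (hp x y).mul hsq
    have he2 : (Rreg πref r β (π θ₀) x y - ∑ y', π θ₀ x y' * Rreg πref r β (π θ₀) x y') ^ 2
        = (Rreg πref r β (π θ₀) x y - ∑ y', π θ₀ x y' * Rreg πref r β (π θ₀) x y') *
          (Rreg πref r β (π θ₀) x y - ∑ y', π θ₀ x y' * Rreg πref r β (π θ₀) x y') := sq _
    rw [he2]
    exact h
  -- now identify the derivative with the claimed one
  have key : ∀ x, (∑ y, π θ₀ x y *
      (Rreg πref r β (π θ₀) x y - ∑ y', π θ₀ x y' * Rreg πref r β (π θ₀) x y')) = 0 := by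
    intro x
    simp only [mul_sub, Finset.sum_sub_distrib, ← Finset.sum_mul, hsum θ₀ x, one_mul, sub_self]
  convert hmain using 1
  ext v
  simp only [ContinuousLinearMap.add_apply, ContinuousLinearMap.coe_sum',
    Finset.sum_apply, ContinuousLinearMap.coe_smul', Pi.smul_apply,
    ContinuousLinearMap.sub_apply, smul_eq_mul]
  rw [← Finset.sum_add_distrib, Finset.mul_sum]
  refine Finset.sum_congr rfl fun x _ => ?_
  rw [← Finset.sum_add_distrib]
  symm
  set Bv : ℝ := ∑ y', (π θ₀ x y' * Rreg πref r β (π θ₀) x y') * s x y' v with hBv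
  set Rb : ℝ := ∑ y', π θ₀ x y' * Rreg πref r β (π θ₀) x y' with hRbv
  have h0 : (∑ y, 2 * Bv * (π θ₀ x y * (Rreg πref r β (π θ₀) x y - Rb))) = 0 := by
    rw [← Finset.mul_sum]
    rw [key x]  -- key uses Rb folded? set should have folded it
    ring
  calc (1/2 : ℝ) * (ρ x * ∑ y,
        (π θ₀ x y * ((Rreg πref r β (π θ₀) x y - Rb) * ((-β) * s x y v - Bv)
          + (Rreg πref r β (π θ₀) x y - Rb) * ((-β) * s x y v - Bv))
        + (Rreg πref r β (π θ₀) x y - Rb) ^ 2 * (π θ₀ x y * s x y v)))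
      = (1/2 : ℝ) * (ρ x * ((∑ y,
        (π θ₀ x y * ((Rreg πref r β (π θ₀) x y - Rb) * ((-β) * s x y v - Bv)
          + (Rreg πref r β (π θ₀) x y - Rb) * ((-β) * s x y v - Bv))
        + (Rreg πref r β (π θ₀) x y - Rb) ^ 2 * (π θ₀ x y * s x y v)))
        + ∑ y, 2 * Bv * (π θ₀ x y * (Rreg πref r β (π θ₀) x y - Rb)))) := by
        rw [h0, add_zero]
    _ = ∑ y, ((-β * (ρ x * (π θ₀ x y * (Rreg πref r β (π θ₀) x y - Rb)))) * s x y v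
        + (1/2 * (ρ x * (π θ₀ x y * (Rreg πref r β (π θ₀) x y - Rb) ^ 2))) * s x y v) := by
        rw [← Finset.sum_add_distrib, Finset.mul_sum, Finset.mul_sum]
        refine Finset.sum_congr rfl fun y _ => ?_
        ring
end
end

section
/- (Unbiased off-policy n-sample gradient estimate with leave-one-out baseline) Let μ be a full-support behavior policy, n ≥ 2, and suppose each map θ ↦ π_θ(y|x) is Fréchet differentiable at θ₀. Write π = π_{θ₀}, R(x,y) = R^π_β(x,y), s(x,y) = D_θ[log π_θ(y|x)](θ₀), and for (y₁,…,yₙ) ∈ Yⁿ let R̂₋ᵢ = (1/(n−1))·Σ_{j≠i} R(x,y_j). Then Σ_x ρ(x)·Σ_{(y₁,…,yₙ)∈Yⁿ} (Π_{i=1}^n μ(y_i|x)) · [−(β/n)·Σ_{i=1}^n (R(x,y_i) − R̂₋ᵢ)·s(x,y_i)] equals the Fréchet derivative at θ₀ of θ ↦ L_μ(π_θ). -/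
open Finset

noncomputable section

section
variable {Y M : Type*} [Fintype Y] [AddCommGroup M] [Module ℝ M]

lemma sum_prod_one {κ : Type*} [Fintype κ] [DecidableEq κ]
    (w : Y → ℝ) (hw : ∑ y, w y = 1) :
    ∑ f : κ → Y, ∏ k, w (f k) = 1 := by
  rw [← Fintype.prod_sum fun _ y => w y]
  simp [hw]

lemma splitAt_ne {ι : Type*} [DecidableEq ι] {i : ι}
    (a : Y) (rest : { j // j ≠ i } → Y) (k : ι) (hk : k ≠ i) :
    (Equiv.funSplitAt i Y).symm (a, rest) k = rest ⟨k, hk⟩ := by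
  simp [Equiv.funSplitAt, Equiv.piSplitAt, hk]

lemma splitAt_prod {ι : Type*} [Fintype ι] [DecidableEq ι] {i : ι}
    (w : Y → ℝ) (a : Y) (rest : { j // j ≠ i } → Y) :
    (∏ k, w ((Equiv.funSplitAt i Y).symm (a, rest) k))
      = w a * ∏ k : { j // j ≠ i }, w (rest k) := by
  rw [Fintype.prod_eq_mul_prod_compl i]
  congr 1
  · simp
  · rw [Finset.prod_subtype ({i}ᶜ : Finset ι) (p := fun k => k ≠ i) (fun k => by simp)
      (fun k => w ((Equiv.funSplitAt i Y).symm (a, rest) k))]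
    exact Fintype.prod_congr _ _ fun k => by rw [splitAt_ne a rest k k.2]

lemma expect_coord {ι : Type*} [Fintype ι] [DecidableEq ι]
    (w : Y → ℝ) (hw : ∑ y, w y = 1) (i : ι) (g : Y → M) :
    ∑ ys : ι → Y, (∏ k, w (ys k)) • g (ys i) = ∑ a, w a • g a := by
  calc ∑ ys : ι → Y, (∏ k, w (ys k)) • g (ys i)
      = ∑ p : Y × ({ j // j ≠ i } → Y),
          (∏ k, w ((Equiv.funSplitAt i Y).symm p k)) • g ((Equiv.funSplitAt i Y).symm p i) :=
        (Equiv.sum_comp (Equiv.funSplitAt i Y).symm _).symm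
    _ = ∑ a, w a • g a := by
        rw [Fintype.sum_prod_type]
        refine Finset.sum_congr rfl fun a _ => ?_
        have : ∀ rest : { j // j ≠ i } → Y,
            (∏ k, w ((Equiv.funSplitAt i Y).symm (a, rest) k)) • g ((Equiv.funSplitAt i Y).symm (a, rest) i)
            = ((∏ k : { j // j ≠ i }, w (rest k)) * w a) • g a := by
          intro rest
          rw [splitAt_prod, show (Equiv.funSplitAt i Y).symm (a, rest) i = a by simp, mul_comm]
        rw [Finset.sum_congr rfl fun rest _ => this rest, ← Finset.sum_smul, ← Finset.sum_mul,
          sum_prod_one _ hw, one_mul]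

lemma expect_two_coords {ι : Type*} [Fintype ι] [DecidableEq ι]
    (w : Y → ℝ) (hw : ∑ y, w y = 1) (i j : ι) (hij : j ≠ i) (c : Y → ℝ) (g : Y → M) :
    ∑ ys : ι → Y, (∏ k, w (ys k)) • (c (ys j) • g (ys i))
      = ∑ a, (w a * ∑ b, w b * c b) • g a := by
  calc ∑ ys : ι → Y, (∏ k, w (ys k)) • (c (ys j) • g (ys i))
      = ∑ p : Y × ({ j // j ≠ i } → Y),
          (∏ k, w ((Equiv.funSplitAt i Y).symm p k)) •
            (c ((Equiv.funSplitAt i Y).symm p j) • g ((Equiv.funSplitAt i Y).symm p i)) :=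
        (Equiv.sum_comp (Equiv.funSplitAt i Y).symm _).symm
    _ = ∑ a, (w a * ∑ b, w b * c b) • g a := by
        rw [Fintype.sum_prod_type]
        refine Finset.sum_congr rfl fun a _ => ?_
        have : ∀ rest : { j // j ≠ i } → Y,
            (∏ k, w ((Equiv.funSplitAt i Y).symm (a, rest) k)) •
              (c ((Equiv.funSplitAt i Y).symm (a, rest) j) • g ((Equiv.funSplitAt i Y).symm (a, rest) i))
            = (w a * ((∏ k : { j // j ≠ i }, w (rest k)) • c (rest ⟨j, hij⟩))) • g a := by
          intro rest
          rw [splitAt_prod, show (Equiv.funSplitAt i Y).symm (a, rest) i = a by simp,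
            splitAt_ne a rest j hij, smul_smul, smul_eq_mul]
          ring_nf
        rw [Finset.sum_congr rfl fun rest _ => this rest, ← Finset.sum_smul, ← Finset.mul_sum,
          expect_coord w hw (⟨j, hij⟩ : { k // k ≠ i }) c]
        simp [smul_eq_mul]

lemma estimate_expectation
    (w c : Y → ℝ) (hw : ∑ y, w y = 1) (F : Y → M) (β : ℝ) (n : ℕ) (hn : 2 ≤ n) :
    ∑ ys : Fin n → Y, (∏ k, w (ys k)) •
        (∑ i : Fin n,
          (-(β / (n : ℝ)) * (c (ys i) - (1 / ((n : ℝ) - 1)) * ∑ j ∈ Finset.univ.erase i, c (ys j))) •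
            F (ys i))
      = ∑ y, (-β * (w y * (c y - ∑ b, w b * c b))) • F y := by
  have hn0 : (n : ℝ) ≠ 0 := by
    have : 0 < n := lt_of_lt_of_le (by norm_num) hn
    exact_mod_cast this.ne'
  have hn1 : (n : ℝ) - 1 ≠ 0 := by
    have h2 : (2 : ℝ) ≤ (n : ℝ) := by exact_mod_cast hn
    nlinarith
  set Bb : ℝ := ∑ b, w b * c b with hBb
  -- pointwise split of the coefficient
  have key : ∀ i : Fin n,
      ∑ ys : Fin n → Y, (∏ k, w (ys k)) •
        ((-(β / (n : ℝ)) * (c (ys i) - (1 / ((n : ℝ) - 1)) * ∑ j ∈ Finset.univ.erase i, c (ys j))) •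
          F (ys i))
      = ∑ y, (-(β / (n : ℝ)) * (w y * (c y - Bb))) • F y := by
    intro i
    have point : ∀ ys : Fin n → Y,
        (∏ k, w (ys k)) •
          ((-(β / (n : ℝ)) * (c (ys i) - (1 / ((n : ℝ) - 1)) * ∑ j ∈ Finset.univ.erase i, c (ys j))) •
            F (ys i))
        = (∏ k, w (ys k)) • ((-(β / (n : ℝ)) * c (ys i)) • F (ys i))
          + ∑ j ∈ Finset.univ.erase i,
              (∏ k, w (ys k)) • (((β / ((n : ℝ) * ((n : ℝ) - 1))) * c (ys j)) • F (ys i)) := by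
      intro ys
      rw [← Finset.smul_sum, ← smul_add]
      congr 1
      rw [← Finset.sum_smul, ← add_smul]
      congr 1
      rw [← Finset.mul_sum]
      field_simp
      ring
    rw [Finset.sum_congr rfl fun ys _ => point ys, Finset.sum_add_distrib]
    rw [expect_coord w hw i (fun a => (-(β / (n : ℝ)) * c a) • F a)]
    rw [Finset.sum_comm]
    have hB : ∀ j ∈ Finset.univ.erase i,
        ∑ ys : Fin n → Y, (∏ k, w (ys k)) • (((β / ((n : ℝ) * ((n : ℝ) - 1))) * c (ys j)) • F (ys i))
        = ∑ a, (w a * ∑ b, w b * ((β / ((n : ℝ) * ((n : ℝ) - 1))) * c b)) • F a := by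
      intro j hj
      exact expect_two_coords w hw i j (Finset.ne_of_mem_erase hj) (fun b => (β / ((n : ℝ) * ((n : ℝ) - 1))) * c b) F
    rw [Finset.sum_congr rfl hB, Finset.sum_const, Finset.card_erase_of_mem (Finset.mem_univ i),
      Finset.card_univ, Fintype.card_fin]
    have hcast : (n - 1 : ℕ) • (∑ a, (w a * ∑ b, w b * ((β / ((n : ℝ) * ((n : ℝ) - 1))) * c b)) • F a)
        = ((n : ℝ) - 1) • (∑ a, (w a * ∑ b, w b * ((β / ((n : ℝ) * ((n : ℝ) - 1))) * c b)) • F a) := by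
      rw [← Nat.cast_smul_eq_nsmul ℝ]
      congr 1
      rw [Nat.cast_sub (le_trans one_le_two hn), Nat.cast_one]
    rw [hcast, Finset.smul_sum, ← Finset.sum_add_distrib]
    refine Finset.sum_congr rfl fun a _ => ?_
    rw [smul_smul, smul_smul, ← add_smul]
    congr 1
    have : ∑ b, w b * ((β / ((n : ℝ) * ((n : ℝ) - 1))) * c b)
        = (β / ((n : ℝ) * ((n : ℝ) - 1))) * Bb := by
      rw [hBb, Finset.mul_sum]
      exact Finset.sum_congr rfl fun b _ => by ring
    rw [this]
    field_simp
    ring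
  simp only [Finset.smul_sum]
  rw [Finset.sum_comm, Finset.sum_congr rfl fun i _ => key i, Finset.sum_const,
    Finset.card_univ, Fintype.card_fin, ← Nat.cast_smul_eq_nsmul ℝ, Finset.smul_sum]
  refine Finset.sum_congr rfl fun y _ => ?_
  rw [smul_smul]
  congr 1
  field_simp
end


/-- the off-policy `n`-sample gradient estimate with leave-one-out baseline
is an unbiased estimate of the gradient of the off-policy loss. -/
theorem off_policy_n_sample_estimate_unbiased
    {X Y : Type*} [Fintype X] [Fintype Y] [Nonempty X] [Nonempty Y]
    {Θ : Type*} [NormedAddCommGroup Θ] [NormedSpace ℝ Θ]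
    (πref : X → Y → ℝ) (href_pos : ∀ x y, 0 < πref x y)
    (href_sum : ∀ x, ∑ y, πref x y = 1)
    (r : X → Y → ℝ) (β : ℝ) (hβ : 0 < β)
    (ρ : X → ℝ) (hρ_nonneg : ∀ x, 0 ≤ ρ x) (hρ_sum : ∑ x, ρ x = 1)
    (μ : X → Y → ℝ) (hμ_pos : ∀ x y, 0 < μ x y) (hμ_sum : ∀ x, ∑ y, μ x y = 1)
    (n : ℕ) (hn : 2 ≤ n)
    (π : Θ → X → Y → ℝ) (hpos : ∀ θ x y, 0 < π θ x y) (hsum : ∀ θ x, ∑ y, π θ x y = 1)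
    (θ₀ : Θ) (hdiff : ∀ x y, DifferentiableAt ℝ (fun θ => π θ x y) θ₀) :
    (∑ x, ∑ ys : Fin n → Y,
      (ρ x * ∏ i, μ x (ys i)) •
        (∑ i : Fin n,
          (-(β / (n : ℝ)) *
            (Rreg πref r β (π θ₀) x (ys i)
              - (1 / ((n : ℝ) - 1)) *
                  ∑ j ∈ Finset.univ.erase i, Rreg πref r β (π θ₀) x (ys j))) •
            fderiv ℝ (fun θ => Real.log (π θ x (ys i))) θ₀))
      = fderiv ℝ (fun θ => Lmu ρ πref r β μ (π θ)) θ₀ := by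
  classical
  -- notation
  set F : X → Y → (Θ →L[ℝ] ℝ) := fun x y => fderiv ℝ (fun θ => Real.log (π θ x y)) θ₀ with hFdef
  -- derivative of log π
  have hlog : ∀ x y, HasFDerivAt (fun θ => Real.log (π θ x y)) (F x y) θ₀ := fun x y =>
    ((hdiff x y).log (hpos θ₀ x y).ne').hasFDerivAt
  -- derivative of the regularized reward
  have hR : ∀ x y, HasFDerivAt (fun θ => Rreg πref r β (π θ) x y) ((-β) • F x y) θ₀ := by
    intro x y
    have heq : (fun θ => Rreg πref r β (π θ) x y)
        = fun θ => r x y - β * (Real.log (π θ x y) - Real.log (πref x y)) := by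
      funext θ
      rw [Rreg, Real.log_div (hpos θ x y).ne' (href_pos x y).ne']
    rw [heq]
    have h2 := (hasFDerivAt_const (r x y) θ₀).fun_sub (((hlog x y).sub_const (Real.log (πref x y))).const_mul β)
    rw [zero_sub, ← neg_smul] at h2
    exact h2
  -- the centered reward and its derivative
  have hδ : ∀ x y, HasFDerivAt
      (fun θ => Rreg πref r β (π θ) x y - ∑ y', μ x y' * Rreg πref r β (π θ) x y')
      ((-β) • F x y - ∑ y', μ x y' • ((-β) • F x y')) θ₀ := fun x y =>
    (hR x y).fun_sub (HasFDerivAt.fun_sum fun y' _ => (hR x y').const_mul (μ x y'))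
  set δ : X → Y → ℝ := fun x y =>
    Rreg πref r β (π θ₀) x y - ∑ y', μ x y' * Rreg πref r β (π θ₀) x y' with hδdef
  set S : X → (Θ →L[ℝ] ℝ) := fun x => ∑ y', μ x y' • ((-β) • F x y') with hSdef
  -- derivative of the loss
  have hfun : (fun θ => Lmu ρ πref r β μ (π θ)) = fun θ => (1/2 : ℝ) * ∑ x, ρ x * ∑ y, μ x y *
      ((Rreg πref r β (π θ) x y - ∑ y', μ x y' * Rreg πref r β (π θ) x y') *
       (Rreg πref r β (π θ) x y - ∑ y', μ x y' * Rreg πref r β (π θ) x y')) := by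
    funext θ
    simp only [Lmu, pow_two]
  have hL : HasFDerivAt (fun θ => Lmu ρ πref r β μ (π θ))
      ((1/2 : ℝ) • ∑ x, ρ x • ∑ y, μ x y •
        (δ x y • ((-β) • F x y - S x) + δ x y • ((-β) • F x y - S x))) θ₀ := by
    rw [hfun]
    exact (HasFDerivAt.fun_sum (fun x _ =>
      (HasFDerivAt.fun_sum (fun y _ => (((hδ x y).fun_mul (hδ x y)).const_mul (μ x y)))).const_mul
        (ρ x))).const_mul (1/2 : ℝ)
  -- the common normal form
  have hzero : ∀ x, ∑ y, μ x y * δ x y = 0 := by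
    intro x
    simp only [hδdef, mul_sub, Finset.sum_sub_distrib, ← Finset.sum_mul, hμ_sum, one_mul, sub_self]
  have hD : ((1/2 : ℝ) • ∑ x, ρ x • ∑ y, μ x y •
        (δ x y • ((-β) • F x y - S x) + δ x y • ((-β) • F x y - S x)))
      = ∑ x, ρ x • ∑ y, (-β * (μ x y * δ x y)) • F x y := by
    rw [Finset.smul_sum]
    refine Finset.sum_congr rfl fun x _ => ?_
    rw [smul_comm]
    congr 1
    have pt : ∀ y, μ x y • (δ x y • ((-β) • F x y - S x) + δ x y • ((-β) • F x y - S x))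
        = (2 : ℝ) • ((-β * (μ x y * δ x y)) • F x y) + (-(2 * (μ x y * δ x y))) • S x := by
      intro y
      module
    rw [Finset.sum_congr rfl fun y _ => pt y, Finset.sum_add_distrib, ← Finset.smul_sum,
      ← Finset.sum_smul]
    have : (∑ y, -(2 * (μ x y * δ x y))) = 0 := by
      rw [Finset.sum_neg_distrib, ← Finset.mul_sum, hzero x, mul_zero, neg_zero]
    rw [this, zero_smul, add_zero, smul_smul]
    norm_num
  -- the LHS equals the normal form
  have hLHS : (∑ x, ∑ ys : Fin n → Y,
      (ρ x * ∏ i, μ x (ys i)) •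
        (∑ i : Fin n,
          (-(β / (n : ℝ)) *
            (Rreg πref r β (π θ₀) x (ys i)
              - (1 / ((n : ℝ) - 1)) *
                  ∑ j ∈ Finset.univ.erase i, Rreg πref r β (π θ₀) x (ys j))) • F x (ys i)))
      = ∑ x, ρ x • ∑ y, (-β * (μ x y * δ x y)) • F x y := by
    refine Finset.sum_congr rfl fun x _ => ?_
    have hest := estimate_expectation (μ x) (fun y => Rreg πref r β (π θ₀) x y) (hμ_sum x)
      (fun y => F x y) β n hn
    have hδy : ∀ y, (-β * (μ x y * δ x y)) • F x y
        = (-β * (μ x y * (Rreg πref r β (π θ₀) x y - ∑ b, μ x b * Rreg πref r β (π θ₀) x b))) • F x y := by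
      intro y; rfl
    rw [Finset.sum_congr rfl fun y _ => hδy y, ← hest]
    conv_rhs => rw [Finset.smul_sum]
    exact Finset.sum_congr rfl fun ys _ => mul_smul _ _ _
  rw [hLHS, hL.fderiv, hD]
end
end

section
/- (Unbiased on-policy AGRO gradient estimate) Let n ≥ 2 and suppose each map θ ↦ π_θ(y|x) is Fréchet differentiable at θ₀. Write π = π_{θ₀}, R(x,y) = R^π_β(x,y), s(x,y) = D_θ[log π_θ(y|x)](θ₀), and for (y₁,…,yₙ) ∈ Yⁿ let R̂₋ᵢ = (1/(n−1))·Σ_{j≠i} R(x,y_j). Then Σ_x ρ(x)·Σ_{(y₁,…,yₙ)∈Yⁿ} (Π_{i=1}^n π(y_i|x)) · [−(β/n)·Σ_{i=1}^n (R(x,y_i) − R̂₋ᵢ)·s(x,y_i) + (1/(2n))·Σ_{i=1}^n (R(x,y_i) − R̂₋ᵢ)²·s(x,y_i)] equals the Fréchet derivative at θ₀ of θ ↦ L(π_θ), where L(π_θ) = L_{π_θ}(π_θ). -/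
open Finset

noncomputable section

lemma sum_pi_prod {Y : Type*} [Fintype Y] {n : ℕ} (g : Fin n → Y → ℝ) :
    ∑ ys : Fin n → Y, ∏ i, g i (ys i) = ∏ i, ∑ y, g i y := by
  classical
  rw [Finset.prod_univ_sum]
  simp [Fintype.piFinset_univ]

lemma expect_factor {Y : Type*} [Fintype Y] {n : ℕ} (p : Y → ℝ) (hp : ∑ y, p y = 1)
    (s : Finset (Fin n)) (F : Fin n → Y → ℝ) (hF : ∀ k ∉ s, F k = fun _ => 1) :
    ∑ ys : Fin n → Y, (∏ k, p (ys k)) * (∏ k ∈ s, F k (ys k))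
      = ∏ k ∈ s, ∑ y, p y * F k y := by
  classical
  have h1 : ∀ ys : Fin n → Y, (∏ k, p (ys k)) * (∏ k ∈ s, F k (ys k))
      = ∏ k, (p (ys k) * F k (ys k)) := by
    intro ys
    have h2 : ∏ k ∈ s, F k (ys k) = ∏ k : Fin n, F k (ys k) :=
      Finset.prod_subset (Finset.subset_univ s) (fun k _ hk => by simp [hF k hk])
    rw [Finset.prod_mul_distrib, ← h2]
  have hmain : ∑ ys : Fin n → Y, (∏ k, p (ys k)) * (∏ k ∈ s, F k (ys k))
      = ∏ k : Fin n, ∑ y, p y * F k y := by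
    rw [← sum_pi_prod (fun k y => p y * F k y)]
    exact Finset.sum_congr rfl fun ys _ => h1 ys
  rw [hmain]
  exact (Finset.prod_subset (Finset.subset_univ s)
    (fun k _ hk => by simp [hF k hk, hp])).symm

lemma expect_one {Y : Type*} [Fintype Y] {n : ℕ} (p : Y → ℝ) (hp : ∑ y, p y = 1)
    (i : Fin n) (h : Y → ℝ) :
    ∑ ys : Fin n → Y, (∏ k, p (ys k)) * h (ys i) = ∑ y, p y * h y := by
  classical
  have key := expect_factor p hp {i} (Function.update (fun _ _ => (1:ℝ)) i h)
    (fun k hk => by rw [Function.update_of_ne (by simpa using hk)])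
  simp only [Finset.prod_singleton, Function.update_self] at key
  exact key

lemma expect_two {Y : Type*} [Fintype Y] {n : ℕ} (p : Y → ℝ) (hp : ∑ y, p y = 1)
    {i j : Fin n} (hij : i ≠ j) (h g : Y → ℝ) :
    ∑ ys : Fin n → Y, (∏ k, p (ys k)) * (h (ys i) * g (ys j))
      = (∑ y, p y * h y) * (∑ y, p y * g y) := by
  classical
  set F : Fin n → Y → ℝ := Function.update (Function.update (fun _ _ => 1) i h) j g with hFdef
  have hFi : F i = h := by
    rw [hFdef, Function.update_of_ne hij, Function.update_self]
  have hFj : F j = g := by rw [hFdef, Function.update_self]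
  have key := expect_factor p hp {i, j} F (fun k hk => by
    simp only [Finset.mem_insert, Finset.mem_singleton, not_or] at hk
    rw [hFdef, Function.update_of_ne hk.2, Function.update_of_ne hk.1])
  simp only [Finset.prod_pair hij, hFi, hFj] at key
  exact key

lemma expect_three {Y : Type*} [Fintype Y] {n : ℕ} (p : Y → ℝ) (hp : ∑ y, p y = 1)
    {i j l : Fin n} (hij : i ≠ j) (hil : i ≠ l) (hjl : j ≠ l) (h g f : Y → ℝ) :
    ∑ ys : Fin n → Y, (∏ k, p (ys k)) * (h (ys i) * g (ys j) * f (ys l))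
      = (∑ y, p y * h y) * (∑ y, p y * g y) * (∑ y, p y * f y) := by
  classical
  set F : Fin n → Y → ℝ :=
    Function.update (Function.update (Function.update (fun _ _ => 1) i h) j g) l f with hFdef
  have hFi : F i = h := by
    rw [hFdef, Function.update_of_ne hil, Function.update_of_ne hij, Function.update_self]
  have hFj : F j = g := by rw [hFdef, Function.update_of_ne hjl, Function.update_self]
  have hFl : F l = f := by rw [hFdef, Function.update_self]
  have key := expect_factor p hp {i, j, l} F (fun k hk => by
    simp only [Finset.mem_insert, Finset.mem_singleton, not_or] at hk
    rw [hFdef, Function.update_of_ne hk.2.2, Function.update_of_ne hk.2.1,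
      Function.update_of_ne hk.1])
  have hmem : i ∉ ({j, l} : Finset (Fin n)) := by simp [hij, hil]
  simp only [Finset.prod_insert hmem, Finset.prod_pair hjl, hFi, hFj, hFl] at key
  simp only [← mul_assoc] at key ⊢
  exact key

-- linear expectation with leave-one-out baseline
lemma E1 {Y : Type*} [Fintype Y] {n : ℕ} (hn : 2 ≤ n) (p R σ : Y → ℝ)
    (hp : ∑ y, p y = 1) (i : Fin n) :
    ∑ ys : Fin n → Y, (∏ k, p (ys k)) *
        ((R (ys i) - (1/((n:ℝ)-1)) * ∑ j ∈ Finset.univ.erase i, R (ys j)) * σ (ys i))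
      = (∑ y, p y * (R y * σ y)) - (∑ y, p y * σ y) * (∑ y, p y * R y) := by
  classical
  set c : ℝ := 1/((n:ℝ)-1) with hc
  have hn1 : ((n:ℝ) - 1) ≠ 0 := by
    have : (2:ℝ) ≤ (n:ℝ) := by exact_mod_cast hn
    linarith
  have hcard : (((Finset.univ : Finset (Fin n)).erase i).card : ℝ) = (n:ℝ) - 1 := by
    rw [Finset.card_erase_of_mem (Finset.mem_univ i)]
    simp only [Finset.card_univ, Fintype.card_fin]
    have h1 : 1 ≤ n := by omega
    push_cast [Nat.cast_sub h1]
    ring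
  have per : ∀ ys : Fin n → Y, (∏ k, p (ys k)) *
        ((R (ys i) - c * ∑ j ∈ Finset.univ.erase i, R (ys j)) * σ (ys i))
      = (∏ k, p (ys k)) * (R (ys i) * σ (ys i))
        - c * ∑ j ∈ Finset.univ.erase i, (∏ k, p (ys k)) * (σ (ys i) * R (ys j)) := by
    intro ys
    have h2 : ∑ j ∈ Finset.univ.erase i, (∏ k, p (ys k)) * (σ (ys i) * R (ys j))
        = ((∏ k, p (ys k)) * σ (ys i)) * ∑ j ∈ Finset.univ.erase i, R (ys j) := by
      rw [Finset.mul_sum]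
      exact Finset.sum_congr rfl fun j _ => by ring
    rw [h2]; ring
  rw [Finset.sum_congr rfl fun ys _ => per ys, Finset.sum_sub_distrib, ← Finset.mul_sum,
    Finset.sum_comm]
  rw [expect_one p hp i (fun y => R y * σ y)]
  have hj : ∀ j ∈ Finset.univ.erase i, (∑ ys : Fin n → Y, (∏ k, p (ys k)) * (σ (ys i) * R (ys j)))
      = (∑ y, p y * σ y) * (∑ y, p y * R y) := fun j hj =>
    expect_two p hp (Finset.ne_of_mem_erase hj).symm σ R
  rw [Finset.sum_congr rfl hj, Finset.sum_const, nsmul_eq_mul, hcard]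
  rw [hc]
  field_simp

lemma E2 {Y : Type*} [Fintype Y] {n : ℕ} (hn : 2 ≤ n) (p R σ : Y → ℝ)
    (hp : ∑ y, p y = 1) (i : Fin n) :
    ∑ ys : Fin n → Y, (∏ k, p (ys k)) *
        ((R (ys i) - (1/((n:ℝ)-1)) * ∑ j ∈ Finset.univ.erase i, R (ys j))^2 * σ (ys i))
      = (∑ y, p y * (R y * R y * σ y))
        - 2 * (∑ y, p y * (R y * σ y)) * (∑ y, p y * R y)
        + (1/((n:ℝ)-1)) * ((∑ y, p y * σ y) * (∑ y, p y * (R y * R y)))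
        + (1/((n:ℝ)-1)) * ((n:ℝ)-2) *
            ((∑ y, p y * σ y) * (∑ y, p y * R y) * (∑ y, p y * R y)) := by
  classical
  set c : ℝ := 1/((n:ℝ)-1) with hc
  set e : Finset (Fin n) := Finset.univ.erase i with he
  have hn1 : ((n:ℝ) - 1) ≠ 0 := by
    have : (2:ℝ) ≤ (n:ℝ) := by exact_mod_cast hn
    linarith
  have hcard : ((e.card : ℕ) : ℝ) = (n:ℝ) - 1 := by
    rw [he, Finset.card_erase_of_mem (Finset.mem_univ i)]
    simp only [Finset.card_univ, Fintype.card_fin]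
    have h1 : 1 ≤ n := by omega
    push_cast [Nat.cast_sub h1]
    ring
  have hcard2 : ∀ j ∈ e, (((e.erase j).card : ℕ) : ℝ) = (n:ℝ) - 2 := by
    intro j hj
    rw [Finset.card_erase_of_mem hj, he, Finset.card_erase_of_mem (Finset.mem_univ i)]
    simp only [Finset.card_univ, Fintype.card_fin]
    have h2 : 2 ≤ n := hn
    push_cast [Nat.cast_sub (by omega : 1 ≤ n - 1), Nat.cast_sub (by omega : 1 ≤ n)]
    ring
  -- pointwise expansion
  have per : ∀ ys : Fin n → Y, (∏ k, p (ys k)) *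
        ((R (ys i) - c * ∑ j ∈ e, R (ys j))^2 * σ (ys i))
      = (∏ k, p (ys k)) * (R (ys i) * R (ys i) * σ (ys i))
        - 2 * c * ∑ j ∈ e, (∏ k, p (ys k)) * (R (ys i) * σ (ys i) * R (ys j))
        + c * c * ∑ j ∈ e, ∑ k' ∈ e, (∏ k, p (ys k)) * (σ (ys i) * R (ys j) * R (ys k')) := by
    intro ys
    have hA : ∑ j ∈ e, (∏ k, p (ys k)) * (R (ys i) * σ (ys i) * R (ys j))
        = ((∏ k, p (ys k)) * (R (ys i) * σ (ys i))) * ∑ j ∈ e, R (ys j) := by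
      rw [Finset.mul_sum]; exact Finset.sum_congr rfl fun j _ => by ring
    have hB : ∑ j ∈ e, ∑ k' ∈ e, (∏ k, p (ys k)) * (σ (ys i) * R (ys j) * R (ys k'))
        = ((∏ k, p (ys k)) * σ (ys i)) * ((∑ j ∈ e, R (ys j)) * (∑ j ∈ e, R (ys j))) := by
      have hj : ∀ j ∈ e, ∑ k' ∈ e, (∏ k, p (ys k)) * (σ (ys i) * R (ys j) * R (ys k'))
          = ((∏ k, p (ys k)) * σ (ys i) * R (ys j)) * ∑ k' ∈ e, R (ys k') := by
        intro j _
        rw [Finset.mul_sum]; exact Finset.sum_congr rfl fun k' _ => by ring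
      rw [Finset.sum_congr rfl hj, ← Finset.sum_mul, ← Finset.mul_sum]
      ring
    rw [hA, hB]; ring
  rw [Finset.sum_congr rfl fun ys _ => per ys]
  rw [Finset.sum_add_distrib, Finset.sum_sub_distrib, ← Finset.mul_sum, ← Finset.mul_sum,
    Finset.sum_comm]
  -- first term
  rw [expect_one p hp i (fun y => R y * R y * σ y)]
  -- second term
  have hj2 : ∀ j ∈ e, (∑ ys : Fin n → Y, (∏ k, p (ys k)) * (R (ys i) * σ (ys i) * R (ys j)))
      = (∑ y, p y * (R y * σ y)) * (∑ y, p y * R y) := by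
    intro j hj
    have hij : i ≠ j := (Finset.ne_of_mem_erase hj).symm
    have := expect_two p hp hij (fun y => R y * σ y) R
    rw [← this]
  rw [Finset.sum_congr rfl hj2, Finset.sum_const, nsmul_eq_mul, hcard]
  -- third term: swap the double sum inside
  have hswap : ∑ ys : Fin n → Y, ∑ j ∈ e, ∑ k' ∈ e, (∏ k, p (ys k)) * (σ (ys i) * R (ys j) * R (ys k'))
      = ∑ j ∈ e, ∑ k' ∈ e, ∑ ys : Fin n → Y, (∏ k, p (ys k)) * (σ (ys i) * R (ys j) * R (ys k')) := by
    rw [Finset.sum_comm]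
    exact Finset.sum_congr rfl fun j _ => Finset.sum_comm
  rw [hswap]
  have hj3 : ∀ j ∈ e, ∑ k' ∈ e, ∑ ys : Fin n → Y, (∏ k, p (ys k)) * (σ (ys i) * R (ys j) * R (ys k'))
      = (∑ y, p y * σ y) * (∑ y, p y * (R y * R y))
        + ((n:ℝ)-2) * ((∑ y, p y * σ y) * (∑ y, p y * R y) * (∑ y, p y * R y)) := by
    intro j hj
    have hij : i ≠ j := (Finset.ne_of_mem_erase hj).symm
    rw [← Finset.add_sum_erase e _ hj]
    have hdiag : ∑ ys : Fin n → Y, (∏ k, p (ys k)) * (σ (ys i) * R (ys j) * R (ys j))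
        = (∑ y, p y * σ y) * (∑ y, p y * (R y * R y)) := by
      have := expect_two p hp hij σ (fun y => R y * R y)
      rw [← this]
      exact Finset.sum_congr rfl fun ys _ => by ring
    have hoff : ∀ k' ∈ e.erase j, ∑ ys : Fin n → Y, (∏ k, p (ys k)) * (σ (ys i) * R (ys j) * R (ys k'))
        = (∑ y, p y * σ y) * (∑ y, p y * R y) * (∑ y, p y * R y) := by
      intro k' hk'
      have hjk : j ≠ k' := (Finset.ne_of_mem_erase hk').symm
      have hik : i ≠ k' := (Finset.ne_of_mem_erase (Finset.mem_of_mem_erase hk')).symm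
      exact expect_three p hp hij hik hjk σ R R
    rw [hdiag, Finset.sum_congr rfl hoff, Finset.sum_const, nsmul_eq_mul, hcard2 j hj]
  rw [Finset.sum_congr rfl hj3, Finset.sum_const, nsmul_eq_mul, hcard]
  rw [hc]
  field_simp
  ring

lemma per_x {Y : Type*} [Fintype Y] {n : ℕ} (hn : 2 ≤ n) (β : ℝ) (p R σ : Y → ℝ)
    (hp : ∑ y, p y = 1) (hσ0 : ∑ y, p y * σ y = 0) :
    ∑ ys : Fin n → Y, (∏ i, p (ys i)) *
        ((∑ i : Fin n, (-(β/(n:ℝ)) *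
            (R (ys i) - (1/((n:ℝ)-1)) * ∑ j ∈ Finset.univ.erase i, R (ys j))) * σ (ys i))
        + (∑ i : Fin n, ((1/(2*(n:ℝ))) *
            (R (ys i) - (1/((n:ℝ)-1)) * ∑ j ∈ Finset.univ.erase i, R (ys j))^2) * σ (ys i)))
      = -β * (∑ y, p y * (R y * σ y))
        + (1/2) * (∑ y, p y * (R y * R y * σ y))
        - (∑ y, p y * R y) * (∑ y, p y * (R y * σ y)) := by
  classical
  have hn0 : (n:ℝ) ≠ 0 := by positivity
  have hn1 : ((n:ℝ) - 1) ≠ 0 := by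
    have : (2:ℝ) ≤ (n:ℝ) := by exact_mod_cast hn
    linarith
  set Δ : (Fin n → Y) → Fin n → ℝ :=
    fun ys i => R (ys i) - (1/((n:ℝ)-1)) * ∑ j ∈ Finset.univ.erase i, R (ys j) with hΔ
  have per : ∀ ys : Fin n → Y, (∏ i, p (ys i)) *
        ((∑ i : Fin n, (-(β/(n:ℝ)) * Δ ys i) * σ (ys i))
        + (∑ i : Fin n, ((1/(2*(n:ℝ))) * (Δ ys i)^2) * σ (ys i)))
      = ∑ i : Fin n, (-(β/(n:ℝ)) * ((∏ k, p (ys k)) * (Δ ys i * σ (ys i)))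
          + (1/(2*(n:ℝ))) * ((∏ k, p (ys k)) * ((Δ ys i)^2 * σ (ys i)))) := by
    intro ys
    rw [mul_add, Finset.mul_sum, Finset.mul_sum, ← Finset.sum_add_distrib]
    exact Finset.sum_congr rfl fun i _ => by ring
  rw [Finset.sum_congr rfl fun ys _ => per ys, Finset.sum_comm]
  have peri : ∀ i : Fin n, ∑ ys : Fin n → Y,
        (-(β/(n:ℝ)) * ((∏ k, p (ys k)) * (Δ ys i * σ (ys i)))
          + (1/(2*(n:ℝ))) * ((∏ k, p (ys k)) * ((Δ ys i)^2 * σ (ys i))))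
      = -(β/(n:ℝ)) * ((∑ y, p y * (R y * σ y)))
        + (1/(2*(n:ℝ))) * ((∑ y, p y * (R y * R y * σ y))
            - 2 * (∑ y, p y * (R y * σ y)) * (∑ y, p y * R y)) := by
    intro i
    rw [Finset.sum_add_distrib, ← Finset.mul_sum, ← Finset.mul_sum, hΔ]
    rw [E1 hn p R σ hp i, E2 hn p R σ hp i, hσ0]
    ring
  rw [Finset.sum_congr rfl fun i _ => peri i, Finset.sum_const, Finset.card_univ,
    Fintype.card_fin, nsmul_eq_mul]
  field_simp
  ring

lemma scalar_step {Y : Type*} [Fintype Y] {n : ℕ} (hn : 2 ≤ n) (β ρx : ℝ) (p R q : Y → ℝ)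
    (hppos : ∀ y, 0 < p y) (hp : ∑ y, p y = 1) (hq : ∑ y, q y = 0) :
    ∑ ys : Fin n → Y, (ρx * ∏ i, p (ys i)) *
        ((∑ i : Fin n, -(β/(n:ℝ)) *
            (R (ys i) - 1/((n:ℝ)-1) * ∑ j ∈ Finset.univ.erase i, R (ys j)) *
              ((p (ys i))⁻¹ * q (ys i)))
        + (∑ i : Fin n, 1/(2*(n:ℝ)) *
            (R (ys i) - 1/((n:ℝ)-1) * ∑ j ∈ Finset.univ.erase i, R (ys j))^2 *
              ((p (ys i))⁻¹ * q (ys i))))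
      = 1/2 * (ρx * ∑ y,
          (p y * ((R y - ∑ y', p y' * R y') *
              (-(β * ((p y)⁻¹ * q y)) - ∑ y', (p y' * -(β * ((p y')⁻¹ * q y')) + R y' * q y'))
            + (R y - ∑ y', p y' * R y') *
              (-(β * ((p y)⁻¹ * q y)) - ∑ y', (p y' * -(β * ((p y')⁻¹ * q y')) + R y' * q y')))
          + (R y - ∑ y', p y' * R y') * (R y - ∑ y', p y' * R y') * q y)) := by
  classical
  have hne : ∀ y, p y ≠ 0 := fun y => (hppos y).ne'
  have hσ0 : ∑ y, p y * ((p y)⁻¹ * q y) = 0 := by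
    rw [Finset.sum_congr rfl fun y _ =>
      (show p y * ((p y)⁻¹ * q y) = q y from by field_simp [hne y])]
    exact hq
  -- LHS: pull out ρx and apply per_x
  have hL : ∑ ys : Fin n → Y, (ρx * ∏ i, p (ys i)) *
        ((∑ i : Fin n, -(β/(n:ℝ)) *
            (R (ys i) - 1/((n:ℝ)-1) * ∑ j ∈ Finset.univ.erase i, R (ys j)) *
              ((p (ys i))⁻¹ * q (ys i)))
        + (∑ i : Fin n, 1/(2*(n:ℝ)) *
            (R (ys i) - 1/((n:ℝ)-1) * ∑ j ∈ Finset.univ.erase i, R (ys j))^2 *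
              ((p (ys i))⁻¹ * q (ys i))))
      = ρx * (-β * (∑ y, p y * (R y * ((p y)⁻¹ * q y)))
          + (1/2) * (∑ y, p y * (R y * R y * ((p y)⁻¹ * q y)))
          - (∑ y, p y * R y) * (∑ y, p y * (R y * ((p y)⁻¹ * q y)))) := by
    have hpx := per_x hn β p R (fun y => (p y)⁻¹ * q y) hp hσ0
    beta_reduce at hpx
    rw [← hpx, Finset.mul_sum]
    exact Finset.sum_congr rfl fun ys _ => by ring
  rw [hL]
  -- convert σ-sums to q-sums
  have hA1 : ∑ y, p y * (R y * ((p y)⁻¹ * q y)) = ∑ y, R y * q y :=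
    Finset.sum_congr rfl fun y _ => by field_simp [hne y]
  have hA2 : ∑ y, p y * (R y * R y * ((p y)⁻¹ * q y)) = ∑ y, R y * R y * q y :=
    Finset.sum_congr rfl fun y _ => by field_simp [hne y]
  rw [hA1, hA2]
  -- RHS: simplify the inner mean-derivative sum
  have hMv : (∑ y', (p y' * -(β * ((p y')⁻¹ * q y')) + R y' * q y'))
      = ∑ y', R y' * q y' := by
    rw [Finset.sum_congr rfl fun y' _ =>
      (show p y' * -(β * ((p y')⁻¹ * q y')) + R y' * q y'
        = -β * q y' + R y' * q y' from by field_simp [hne y']), Finset.sum_add_distrib, ← Finset.mul_sum, hq]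
    ring
  rw [hMv]
  -- per-y expansion of the RHS summand
  set m := ∑ y', p y' * R y' with hm
  set B1 := ∑ y', R y' * q y' with hB1
  have hper : ∀ y, (p y * ((R y - m) * (-(β * ((p y)⁻¹ * q y)) - B1)
        + (R y - m) * (-(β * ((p y)⁻¹ * q y)) - B1))
      + (R y - m) * (R y - m) * q y)
      = (2*β*m + m*m) * q y + (-2*β - 2*m) * (R y * q y) + R y * R y * q y
        + (2*B1*m) * p y + (-2*B1) * (p y * R y) := by
    intro y
    field_simp [hne y]
    ring
  rw [Finset.sum_congr rfl fun y _ => hper y]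
  simp only [Finset.sum_add_distrib]
  rw [← Finset.mul_sum, ← Finset.mul_sum, ← Finset.mul_sum, ← Finset.mul_sum, hq, hp, ← hB1]
  ring

/-- the on-policy AGRO `n`-sample gradient estimate (pathwise-derivative
term plus likelihood-ratio term, with leave-one-out baselines) is an unbiased estimate of
the gradient of the on-policy loss `θ ↦ L(π_θ) = L_{π_θ}(π_θ)`. -/
theorem on_policy_AGRO_estimate_unbiased
    {X Y : Type*} [Fintype X] [Fintype Y] [Nonempty X] [Nonempty Y]
    {Θ : Type*} [NormedAddCommGroup Θ] [NormedSpace ℝ Θ]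
    (πref : X → Y → ℝ) (href_pos : ∀ x y, 0 < πref x y)
    (href_sum : ∀ x, ∑ y, πref x y = 1)
    (r : X → Y → ℝ) (β : ℝ) (hβ : 0 < β)
    (ρ : X → ℝ) (hρ_nonneg : ∀ x, 0 ≤ ρ x) (hρ_sum : ∑ x, ρ x = 1)
    (n : ℕ) (hn : 2 ≤ n)
    (π : Θ → X → Y → ℝ) (hpos : ∀ θ x y, 0 < π θ x y) (hsum : ∀ θ x, ∑ y, π θ x y = 1)
    (θ₀ : Θ) (hdiff : ∀ x y, DifferentiableAt ℝ (fun θ => π θ x y) θ₀) :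
    (∑ x, ∑ ys : Fin n → Y,
      (ρ x * ∏ i, π θ₀ x (ys i)) •
        ((∑ i : Fin n,
          (-(β / (n : ℝ)) *
            (Rreg πref r β (π θ₀) x (ys i)
              - (1 / ((n : ℝ) - 1)) *
                  ∑ j ∈ Finset.univ.erase i, Rreg πref r β (π θ₀) x (ys j))) •
            fderiv ℝ (fun θ => Real.log (π θ x (ys i))) θ₀)
        + (∑ i : Fin n,
          ((1 / (2 * (n : ℝ))) *
            (Rreg πref r β (π θ₀) x (ys i)
              - (1 / ((n : ℝ) - 1)) *
                  ∑ j ∈ Finset.univ.erase i, Rreg πref r β (π θ₀) x (ys j)) ^ 2) •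
            fderiv ℝ (fun θ => Real.log (π θ x (ys i))) θ₀)))
      = fderiv ℝ (fun θ => Lmu ρ πref r β (π θ) (π θ)) θ₀ := by
  classical
  have hD : ∀ x y, HasFDerivAt (fun θ => π θ x y) (fderiv ℝ (fun θ => π θ x y) θ₀) θ₀ :=
    fun x y => (hdiff x y).hasFDerivAt
  have hlog : ∀ x y, HasFDerivAt (fun θ => Real.log (π θ x y)) ((π θ₀ x y)⁻¹ • fderiv ℝ (fun θ => π θ x y) θ₀) θ₀ :=
    fun x y => (hD x y).log (hpos θ₀ x y).ne'
  have hlogfd : ∀ x y, fderiv ℝ (fun θ => Real.log (π θ x y)) θ₀ = (π θ₀ x y)⁻¹ • fderiv ℝ (fun θ => π θ x y) θ₀ :=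
    fun x y => (hlog x y).fderiv
  have hR' : ∀ x y, HasFDerivAt (fun θ => Rreg πref r β (π θ) x y)
      (-(β • ((π θ₀ x y)⁻¹ • fderiv ℝ (fun θ => π θ x y) θ₀))) θ₀ := by
    intro x y
    have hq : (fun θ => Rreg πref r β (π θ) x y)
        = fun θ => (r x y + β * Real.log (πref x y)) - β * Real.log (π θ x y) := by
      funext θ
      rw [Rreg, Real.log_div (hpos θ x y).ne' (href_pos x y).ne']
      ring
    rw [hq]
    exact ((hlog x y).const_mul β).const_sub _
  have hDzero : ∀ x, (∑ y, fderiv ℝ (fun θ => π θ x y) θ₀) = 0 := by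
    intro x
    have h1 : HasFDerivAt (fun θ => ∑ y, π θ x y) (∑ y, fderiv ℝ (fun θ => π θ x y) θ₀) θ₀ :=
      HasFDerivAt.fun_sum (fun y _ => hD x y)
    have h2 : (fun θ => ∑ y, π θ x y) = fun _ => (1:ℝ) := funext fun θ => hsum θ x
    rw [h2] at h1
    exact h1.unique (hasFDerivAt_const 1 θ₀)
  have hM := fun (x : X) => HasFDerivAt.fun_sum (u := (Finset.univ : Finset Y))
    (fun y' _ => (hD x y').fun_mul (hR' x y'))
  have hG := fun (x : X) => HasFDerivAt.fun_sum (u := (Finset.univ : Finset Y))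
    (fun y _ => (hD x y).fun_mul (((hR' x y).fun_sub (hM x)).fun_mul ((hR' x y).fun_sub (hM x))))
  have hL := (HasFDerivAt.fun_sum (u := (Finset.univ : Finset X))
    (fun x _ => (hG x).const_mul (ρ x))).const_mul (1/2 : ℝ)
  have hfun : (fun θ => Lmu ρ πref r β (π θ) (π θ))
      = fun θ => 1/2 * ∑ x, ρ x * ∑ y, π θ x y *
          ((Rreg πref r β (π θ) x y - ∑ y', π θ x y' * Rreg πref r β (π θ) x y') *
           (Rreg πref r β (π θ) x y - ∑ y', π θ x y' * Rreg πref r β (π θ) x y')) := by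
    funext θ
    simp only [Lmu, pow_two]
  rw [hfun, hL.fderiv]
  refine ContinuousLinearMap.ext fun v => ?_
  simp only [ContinuousLinearMap.sum_apply, ContinuousLinearMap.smul_apply,
    ContinuousLinearMap.add_apply, ContinuousLinearMap.sub_apply, ContinuousLinearMap.neg_apply,
    smul_eq_mul, hlogfd, pow_one, Nat.cast_ofNat]
  rw [Finset.mul_sum]
  refine Finset.sum_congr rfl fun x _ => ?_
  have hq0 : ∑ y, fderiv ℝ (fun θ => π θ x y) θ₀ v = 0 := by
    rw [← ContinuousLinearMap.sum_apply, hDzero x, ContinuousLinearMap.zero_apply]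
  exact scalar_step hn β (ρ x) (π θ₀ x) (fun y => Rreg πref r β (π θ₀) x y)
    (fun y => fderiv ℝ (fun θ => π θ x y) θ₀ v) (hpos θ₀ x) (hsum θ₀ x) hq0
end
end

section
/- (Vanishing terms in the squared-regularizer gradient estimate) Suppose each conditional probability θ ↦ π_θ(v | y₁,…,y_{t−1}) is Fréchet differentiable at θ₀ and write π = π_{θ₀}. For all time indices t, t', s in {1,…,T} with t < s and t' < s: Σ_{y∈V^T} π(y) · log(π(y_t|y_{1:t−1})/π_ref(y_t|y_{1:t−1})) · log(π(y_{t'}|y_{1:t'−1})/π_ref(y_{t'}|y_{1:t'−1})) · D_θ[log π_θ(y_s | y_{1:s−1})](θ₀) = 0, where π(y) = Π_{u=1}^T π(y_u | y_{1:u−1}). -/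
open Finset

noncomputable section

/-- Sequence probability of an autoregressive policy given by its conditionals:
`π(y) = ∏_{s=1}^T π(y_s | y_{1:s-1})`. -/
def seqP {V : Type*} [Fintype V] {T : ℕ} (cond : List V → V → ℝ) (y : Fin T → V) : ℝ :=
  ∏ u : Fin T, cond ((List.ofFn y).take u.1) (y u)

lemma marg {V : Type*} [Fintype V] {E : Type*} [AddCommMonoid E] [Module ℝ E]
    (cond : List V → V → ℝ) (hsum : ∀ p, ∑ v, cond p v = 1) (k : ℕ)
    (G : List V → E) :
    ∀ m : ℕ,
      ∑ y : Fin (k + m) → V,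
        (∏ u : Fin (k + m), cond ((List.ofFn y).take u.1) (y u)) • G ((List.ofFn y).take k)
      = ∑ z : Fin k → V,
        (∏ u : Fin k, cond ((List.ofFn z).take u.1) (z u)) • G (List.ofFn z) := by
  intro m
  induction m with
  | zero =>
    apply Finset.sum_congr rfl
    intro z _
    congr 1
    rw [List.take_of_length_le (by simp)]
  | succ m ih =>
    rw [← ih]
    show ∑ y : Fin (k + m + 1) → V,
        (∏ u : Fin (k + m + 1), cond ((List.ofFn y).take u.1) (y u)) • G ((List.ofFn y).take k) = _
    rw [← Equiv.sum_comp (Fin.snocEquiv (fun _ => V)) , Fintype.sum_prod_type]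
    rw [Finset.sum_comm]
    apply Finset.sum_congr rfl
    intro z _
    have hofn : ∀ a : V, List.ofFn (Fin.snocEquiv (fun _ => V) (a, z)) = List.ofFn z ++ [a] := by
      intro a
      have h : (Fin.snocEquiv (fun _ => V) (a, z)) = Fin.snoc z a := rfl
      rw [h, List.ofFn_succ']
      simp [List.concat_eq_append]
    have hprod : ∀ a : V,
        (∏ u : Fin (k + m + 1), cond ((List.ofFn (Fin.snocEquiv (fun _ => V) (a, z))).take u.1)
          ((Fin.snocEquiv (fun _ => V) (a, z)) u))
        = (∏ u : Fin (k + m), cond ((List.ofFn z).take u.1) (z u)) * cond (List.ofFn z) a := by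
      intro a
      rw [Fin.prod_univ_castSucc]
      congr 1
      · apply Finset.prod_congr rfl
        intro u _
        rw [hofn a, List.take_append_of_le_length (by simp [Nat.le_of_lt u.2])]
        congr 1
        simp [Fin.snocEquiv_apply, Fin.snoc_castSucc]
      · rw [hofn a, List.take_append_of_le_length (by simp)]
        rw [List.take_of_length_le (by simp)]
        congr 1
        simp [Fin.snocEquiv_apply]
    have htake : ∀ a : V,
        (List.ofFn (Fin.snocEquiv (fun _ => V) (a, z))).take k = (List.ofFn z).take k := by
      intro a
      rw [hofn a, List.take_append_of_le_length (by simp)]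
    calc ∑ a : V, (∏ u : Fin (k + m + 1),
            cond ((List.ofFn (Fin.snocEquiv (fun _ => V) (a, z))).take u.1)
              ((Fin.snocEquiv (fun _ => V) (a, z)) u)) •
            G ((List.ofFn (Fin.snocEquiv (fun _ => V) (a, z))).take k)
        = ∑ a : V, (cond (List.ofFn z) a) •
            ((∏ u : Fin (k + m), cond ((List.ofFn z).take u.1) (z u)) • G ((List.ofFn z).take k)) := by
          apply Finset.sum_congr rfl
          intro a _
          rw [hprod a, htake a, mul_comm, mul_smul]
      _ = (∏ u : Fin (k + m), cond ((List.ofFn z).take u.1) (z u)) • G ((List.ofFn z).take k) := by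
          rw [← Finset.sum_smul, hsum, one_smul]

lemma getD_take_ofFn {V : Type*} {n : ℕ} (y : Fin n → V) (k i : ℕ) (hik : i < k)
    (hin : i < n) (d : V) :
    ((List.ofFn y).take k).getD i d = y ⟨i, hin⟩ := by
  rw [List.getD_eq_getElem _ _ (by simp; omega)]
  simp [List.getElem_take, hik, hin]

lemma inner_zero {V : Type*} [Fintype V]
    {Θ : Type*} [NormedAddCommGroup Θ] [NormedSpace ℝ Θ]
    (πθ : Θ → List V → V → ℝ)
    (hpos : ∀ θ p v, 0 < πθ θ p v) (hsum : ∀ θ p, ∑ v, πθ θ p v = 1)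
    (θ₀ : Θ) (hdiff : ∀ p v, DifferentiableAt ℝ (fun θ => πθ θ p v) θ₀)
    (p : List V) :
    ∑ a : V, (πθ θ₀ p a) • fderiv ℝ (fun θ => Real.log (πθ θ p a)) θ₀ = 0 := by
  have h1 : ∀ a : V, (πθ θ₀ p a) • fderiv ℝ (fun θ => Real.log (πθ θ p a)) θ₀
      = fderiv ℝ (fun θ => πθ θ p a) θ₀ := by
    intro a
    have hd := (hdiff p a).hasFDerivAt
    have hlog := hd.log (ne_of_gt (hpos θ₀ p a))
    rw [hlog.fderiv, smul_smul, mul_inv_cancel₀ (ne_of_gt (hpos θ₀ p a)), one_smul]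
  rw [Finset.sum_congr rfl (fun a _ => h1 a)]
  rw [← fderiv_fun_sum (fun a _ => hdiff p a)]
  have : (fun θ => ∑ a : V, πθ θ p a) = fun _ => (1 : ℝ) := funext fun θ => hsum θ p
  rw [this, fderiv_fun_const]
  rfl


/-- in the gradient estimate of the squared regularizer, the terms with
`t < s` and `t' < s` vanish in expectation. -/
theorem squared_regularizer_vanishing_terms
    {V : Type*} [Fintype V] [Nonempty V] {T : ℕ} (hT : 1 ≤ T)
    {Θ : Type*} [NormedAddCommGroup Θ] [NormedSpace ℝ Θ]
    (πref : List V → V → ℝ) (href_pos : ∀ p v, 0 < πref p v)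
    (href_sum : ∀ p, ∑ v, πref p v = 1)
    (πθ : Θ → List V → V → ℝ)
    (hpos : ∀ θ p v, 0 < πθ θ p v) (hsum : ∀ θ p, ∑ v, πθ θ p v = 1)
    (θ₀ : Θ) (hdiff : ∀ p v, DifferentiableAt ℝ (fun θ => πθ θ p v) θ₀)
    (t t' s : Fin T) (hts : t < s) (ht's : t' < s) :
    ∑ y : Fin T → V,
      (seqP (πθ θ₀) y *
        (Real.log (πθ θ₀ ((List.ofFn y).take t.1) (y t)
            / πref ((List.ofFn y).take t.1) (y t)) *
          Real.log (πθ θ₀ ((List.ofFn y).take t'.1) (y t')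
            / πref ((List.ofFn y).take t'.1) (y t')))) •
        fderiv ℝ (fun θ => Real.log (πθ θ ((List.ofFn y).take s.1) (y s))) θ₀
      = 0 := by
  classical
  set d : V := Classical.arbitrary V with hd
  obtain ⟨i, j, j', m, hk, hk', hk'', hm⟩ :
      ∃ (i j j' m : ℕ), (s : ℕ) = i ∧ (t : ℕ) = j ∧ (t' : ℕ) = j' ∧ T = (i + 1) + m :=
    ⟨s, t, t', T - (s.1 + 1), rfl, rfl, rfl, by omega⟩
  have hji : j < i := by rw [← hk, ← hk']; exact hts
  have hj'i : j' < i := by rw [← hk, ← hk'']; exact ht's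
  subst hm
  -- the function of the prefix of length i+1
  set G : List V → (Θ →L[ℝ] ℝ) := fun l =>
    (Real.log (πθ θ₀ (l.take j) (l.getD j d) / πref (l.take j) (l.getD j d)) *
      Real.log (πθ θ₀ (l.take j') (l.getD j' d) / πref (l.take j') (l.getD j' d))) •
    fderiv ℝ (fun θ => Real.log (πθ θ (l.take i) (l.getD i d))) θ₀ with hG
  have step1 : ∑ y : Fin (i + 1 + m) → V,
      (seqP (πθ θ₀) y *
        (Real.log (πθ θ₀ ((List.ofFn y).take t.1) (y t)
            / πref ((List.ofFn y).take t.1) (y t)) *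
          Real.log (πθ θ₀ ((List.ofFn y).take t'.1) (y t')
            / πref ((List.ofFn y).take t'.1) (y t')))) •
        fderiv ℝ (fun θ => Real.log (πθ θ ((List.ofFn y).take s.1) (y s))) θ₀
      = ∑ y : Fin (i + 1 + m) → V,
        (∏ u : Fin (i + 1 + m), πθ θ₀ ((List.ofFn y).take u.1) (y u)) •
          G ((List.ofFn y).take (i + 1)) := by
    apply Finset.sum_congr rfl
    intro y _
    have hlen : i + 1 ≤ i + 1 + m := by omega
    have htk : ∀ r : ℕ, r ≤ i + 1 →
        ((List.ofFn y).take (i + 1)).take r = (List.ofFn y).take r := by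
      intro r hr
      rw [List.take_take, min_eq_left hr]
    have hget : ∀ (r : ℕ) (rr : Fin (i + 1 + m)) (hr : r < i + 1) (hrr : (rr : ℕ) = r),
        ((List.ofFn y).take (i + 1)).getD r d = y rr := by
      intro r rr hr hrr
      rw [List.getD_eq_getElem _ _ (by simp; omega)]
      simp only [List.getElem_take, List.getElem_ofFn]
      congr 1
      exact Fin.ext (by simp [hrr])
    rw [hG]
    simp only
    rw [htk j (by omega), htk j' (by omega), htk i (by omega),
      hget j t (by omega) hk', hget j' t' (by omega) hk'', hget i s (by omega) hk]
    rw [seqP, hk, hk', hk'', mul_smul]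
  rw [step1, marg (πθ θ₀) (fun p => hsum θ₀ p) (i + 1) G m]
  -- now split the last coordinate
  rw [← Equiv.sum_comp (Fin.snocEquiv (fun _ => V)), Fintype.sum_prod_type, Finset.sum_comm]
  apply Finset.sum_eq_zero
  intro w _
  have hofn : ∀ a : V, List.ofFn (Fin.snocEquiv (fun _ => V) (a, w)) = List.ofFn w ++ [a] := by
    intro a
    have h : (Fin.snocEquiv (fun _ => V) (a, w)) = Fin.snoc w a := rfl
    rw [h, List.ofFn_succ']
    simp [List.concat_eq_append]
  have hlenw : (List.ofFn w).length = i := by simp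
  have hGval : ∀ a : V, G (List.ofFn w ++ [a]) =
      (Real.log (πθ θ₀ ((List.ofFn w).take j) ((List.ofFn w).getD j d)
          / πref ((List.ofFn w).take j) ((List.ofFn w).getD j d)) *
        Real.log (πθ θ₀ ((List.ofFn w).take j') ((List.ofFn w).getD j' d)
          / πref ((List.ofFn w).take j') ((List.ofFn w).getD j' d))) •
      fderiv ℝ (fun θ => Real.log (πθ θ (List.ofFn w) a)) θ₀ := by
    intro a
    rw [hG]
    simp only
    rw [List.take_append_of_le_length (show j ≤ (List.ofFn w).length by simp; omega),
      List.take_append_of_le_length (show j' ≤ (List.ofFn w).length by simp; omega),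
      List.take_left' hlenw,
      List.getD_append _ _ _ _ (show j < (List.ofFn w).length by simp; omega),
      List.getD_append _ _ _ _ (show j' < (List.ofFn w).length by simp; omega)]
    congr 2
    rw [List.getD_eq_getElem _ _ (by simp)]
    simp [List.getElem_append_right, hlenw]
  have hprod : ∀ a : V,
      (∏ u : Fin (i + 1), πθ θ₀ ((List.ofFn (Fin.snocEquiv (fun _ => V) (a, w))).take u.1)
        ((Fin.snocEquiv (fun _ => V) (a, w)) u))
      = (∏ u : Fin i, πθ θ₀ ((List.ofFn w).take u.1) (w u)) * πθ θ₀ (List.ofFn w) a := by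
    intro a
    rw [Fin.prod_univ_castSucc]
    congr 1
    · apply Finset.prod_congr rfl
      intro u _
      rw [hofn a, List.take_append_of_le_length (by simp)]
      congr 1
      have h : (Fin.snocEquiv (fun _ => V) (a, w)) = Fin.snoc w a := rfl
      rw [h]
      simp
    · rw [hofn a, List.take_append_of_le_length (by simp),
        List.take_of_length_le (by simp)]
      congr 1
      have h : (Fin.snocEquiv (fun _ => V) (a, w)) = Fin.snoc w a := rfl
      rw [h]
      simp
  calc ∑ a : V, (∏ u : Fin (i + 1),
          πθ θ₀ ((List.ofFn (Fin.snocEquiv (fun _ => V) (a, w))).take u.1)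
            ((Fin.snocEquiv (fun _ => V) (a, w)) u)) •
          G (List.ofFn (Fin.snocEquiv (fun _ => V) (a, w)))
      = ((∏ u : Fin i, πθ θ₀ ((List.ofFn w).take u.1) (w u)) *
          (Real.log (πθ θ₀ ((List.ofFn w).take j) ((List.ofFn w).getD j d)
              / πref ((List.ofFn w).take j) ((List.ofFn w).getD j d)) *
            Real.log (πθ θ₀ ((List.ofFn w).take j') ((List.ofFn w).getD j' d)
              / πref ((List.ofFn w).take j') ((List.ofFn w).getD j' d)))) •
        ∑ a : V, (πθ θ₀ (List.ofFn w) a) •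
          fderiv ℝ (fun θ => Real.log (πθ θ (List.ofFn w) a)) θ₀ := by
        rw [Finset.smul_sum]
        apply Finset.sum_congr rfl
        intro a _
        rw [hprod a, hofn a, hGval a]
        simp only [smul_smul]
        congr 1
        ring
    _ = 0 := by
        rw [inner_zero πθ hpos hsum θ₀ hdiff (List.ofFn w), smul_zero]
end
end
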